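/- For all n×n real matrices A and E and every integer ℓ ≥ 0, φ_ℓ(A+E) − φ_ℓ(A) = ∫_0^1 exp((1-s)A)·s^ℓ·E·φ_ℓ(s(A+E)) ds. -/

import Mathlib

attribute [local instance] Matrix.frobeniusNormedAddCommGroup Matrix.frobeniusNormedSpace

open Matrix

/-- The matrix φ-functions: `φ_ℓ(M) = Σ_{k=0}^∞ M^k/(k+ℓ)!`, so `φ_0 = exp`. -/
noncomputable def phiM {m : Type*} [Fintype m] [DecidableEq m] (ℓ : ℕ)
    (M : Matrix m m ℝ) : Matrix m m ℝ :=
  ∑' k : ℕ, ((Nat.factorial (k + ℓ) : ℝ))⁻¹ • M ^ k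

attribute [local instance] Matrix.frobeniusNormedRing Matrix.frobeniusNormedAlgebra

open intervalIntegral in
lemma beta_nat_aux (a b : ℕ) :
    ∫ s in (0:ℝ)..1, s ^ a * (1 - s) ^ b
      = (Nat.factorial a * Nat.factorial b : ℝ) / Nat.factorial (a + b + 1) := by
  induction b generalizing a with
  | zero =>
    have : ((a:ℝ) + 1) ≠ 0 := by positivity
    have hfa : (Nat.factorial a : ℝ) ≠ 0 := by positivity
    simp [integral_pow, Nat.factorial_succ]
    field_simp
  | succ b ih =>
    have ha : ((a:ℝ) + 1) ≠ 0 := by positivity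
    have key : ∫ s in (0:ℝ)..1, (1 - s) ^ (b+1) * s ^ a
        = ((b:ℝ)+1)/((a:ℝ)+1) * ∫ s in (0:ℝ)..1, s^(a+1) * (1-s)^b := by
      have hu : ∀ x ∈ Set.uIcc (0:ℝ) 1, HasDerivAt (fun x : ℝ => (1 - x) ^ (b+1))
          (-(((b:ℝ)+1) * (1 - x) ^ b)) x := by
        intro x _
        have h1 : HasDerivAt (fun x : ℝ => 1 - x) (-1) x := by
          simpa using (hasDerivAt_id x).const_sub 1
        have := h1.fun_pow (b+1)
        simpa [mul_comm, mul_assoc, mul_left_comm] using this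
      have hv : ∀ x ∈ Set.uIcc (0:ℝ) 1, HasDerivAt (fun x : ℝ => x^(a+1)/((a:ℝ)+1))
          (x ^ a) x := by
        intro x _
        have := (hasDerivAt_pow (a+1) x).div_const ((a:ℝ)+1)
        have h2 : (x:ℝ) ^ a * (((a:ℝ)+1)/((a:ℝ)+1)) = x ^ a := by
          rw [div_self ha, mul_one]
        simp only [Nat.cast_add, Nat.cast_one, Nat.add_sub_cancel] at this
        rw [mul_comm, mul_div_assoc, h2] at this
        exact this
      have hparts := integral_mul_deriv_eq_deriv_mul hu hv
        (((continuous_const.mul ((continuous_const.sub continuous_id).pow b)).neg).intervalIntegrable 0 1)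
        ((continuous_pow a).intervalIntegrable 0 1)
      rw [hparts]
      have : (fun x : ℝ => -(((b:ℝ)+1) * (1 - x) ^ b) * (x ^ (a+1) / ((a:ℝ)+1)))
          = fun x : ℝ => (-(((b:ℝ)+1)/((a:ℝ)+1))) * (x ^ (a+1) * (1-x)^b) := by
        funext x; ring
      rw [this, intervalIntegral.integral_const_mul]
      simp
    have hcomm : ∫ s in (0:ℝ)..1, s ^ a * (1 - s) ^ (b+1)
        = ∫ s in (0:ℝ)..1, (1 - s) ^ (b+1) * s ^ a := by
      congr 1; funext s; ring
    rw [hcomm, key, ih (a+1)]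
    rw [div_mul_div_comm]
    have h1 : a + 1 + b + 1 = a + (b+1) + 1 := by omega
    rw [h1]
    have hne : (Nat.factorial (a + (b+1) + 1) : ℝ) ≠ 0 := by positivity
    rw [div_eq_div_iff (by positivity) hne]
    push_cast [Nat.factorial_succ]
    ring

lemma pow_sub_pow_telescope {R : Type*} [Ring R] (A B : R) :
    ∀ m : ℕ, B ^ m - A ^ m = ∑ i ∈ Finset.range m, A ^ i * (B - A) * B ^ (m - 1 - i) := by
  intro m
  induction m with
  | zero => simp
  | succ m ih =>
    have step : B ^ (m+1) - A ^ (m+1) = A * (B ^ m - A ^ m) + (B - A) * B ^ m := by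
      rw [pow_succ' B, pow_succ' A]
      noncomm_ring
    rw [step, ih, Finset.mul_sum, Finset.sum_range_succ']
    simp only [Nat.add_sub_cancel, pow_zero, one_mul]
    congr 1
    apply Finset.sum_congr rfl
    intro i _
    have h : m - (i + 1) = m - 1 - i := by omega
    rw [h, pow_succ', mul_assoc, mul_assoc, mul_assoc]

section aux

variable {n : ℕ}

local notation "𝔸" => Matrix (Fin n) (Fin n) ℝ

lemma norm_pow_le_aux (M : 𝔸) (k : ℕ) :
    ‖M ^ k‖ ≤ (1 + ‖(1 : 𝔸)‖) * ‖M‖ ^ k := by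
  cases k with
  | zero => simpa using le_add_of_nonneg_left zero_le_one
  | succ k =>
    calc ‖M ^ (k+1)‖ ≤ ‖M‖ ^ (k+1) := norm_pow_le' M k.succ_pos
      _ ≤ (1 + ‖(1 : 𝔸)‖) * ‖M‖ ^ (k+1) := by
          nlinarith [norm_nonneg (1 : 𝔸), pow_nonneg (norm_nonneg M) (k+1)]

lemma summable_norm_phi (ℓ : ℕ) (M : 𝔸) :
    Summable fun k : ℕ => ‖((Nat.factorial (k + ℓ) : ℝ))⁻¹ • M ^ k‖ := by
  refine Summable.of_nonneg_of_le (fun k => norm_nonneg _) (fun k => ?_)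
    (((Real.summable_pow_div_factorial ‖M‖).mul_left (1 + ‖(1 : 𝔸)‖)))
  rw [norm_smul]
  have h1 : ‖((Nat.factorial (k + ℓ) : ℝ))⁻¹‖ ≤ ((Nat.factorial k : ℝ))⁻¹ := by
    rw [Real.norm_eq_abs, abs_of_nonneg (by positivity)]
    apply inv_anti₀ (by positivity)
    exact_mod_cast Nat.factorial_le (Nat.le_add_right k ℓ)
  calc ‖((Nat.factorial (k + ℓ) : ℝ))⁻¹‖ * ‖M ^ k‖
      ≤ ((Nat.factorial k : ℝ))⁻¹ * ((1 + ‖(1 : 𝔸)‖) * ‖M‖ ^ k) := by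
        apply mul_le_mul h1 (norm_pow_le_aux M k) (norm_nonneg _) (by positivity)
    _ = (1 + ‖(1 : 𝔸)‖) * (‖M‖ ^ k / (Nat.factorial k : ℝ)) := by ring

lemma summable_phi (ℓ : ℕ) (M : 𝔸) :
    Summable fun k : ℕ => ((Nat.factorial (k + ℓ) : ℝ))⁻¹ • M ^ k :=
  (summable_norm_phi ℓ M).of_norm

lemma phiM_smul (ℓ : ℕ) (s : ℝ) (M : 𝔸) :
    phiM ℓ (s • M) = ∑' k : ℕ, (s ^ k * ((Nat.factorial (k + ℓ) : ℝ))⁻¹) • M ^ k := by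
  rw [phiM]
  refine tsum_congr fun k => ?_
  rw [smul_pow, smul_smul, mul_comm]

lemma summable_norm_gen (A E : 𝔸) (c : ℕ × ℕ → ℝ)
    (hc : ∀ p : ℕ × ℕ, |c p| ≤ ((Nat.factorial p.1 : ℝ))⁻¹ * ((Nat.factorial p.2 : ℝ))⁻¹) :
    Summable fun p : ℕ × ℕ => ‖c p • (A ^ p.1 * E * (A + E) ^ p.2)‖ := by
  set K := 1 + ‖(1 : 𝔸)‖ with hK
  have hK0 : 0 ≤ K := by positivity
  have hsum : Summable fun p : ℕ × ℕ =>
      (K * ‖A‖ ^ p.1 / Nat.factorial p.1) * (K * ‖E‖ * ‖A + E‖ ^ p.2 / Nat.factorial p.2) := by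
    apply Summable.mul_of_nonneg (f := fun i : ℕ => K * ‖A‖ ^ i / Nat.factorial i)
      (g := fun k : ℕ => K * ‖E‖ * ‖A + E‖ ^ k / Nat.factorial k)
    · simpa [mul_div_assoc] using (Real.summable_pow_div_factorial ‖A‖).mul_left K
    · simpa [mul_div_assoc] using (Real.summable_pow_div_factorial ‖A + E‖).mul_left (K * ‖E‖)
    · intro i; positivity
    · intro k; positivity
  refine Summable.of_nonneg_of_le (fun p => norm_nonneg _) (fun p => ?_) hsum
  obtain ⟨i, k⟩ := p
  rw [norm_smul]
  have h2 : ‖A ^ i * E * (A + E) ^ k‖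
      ≤ (K * ‖A‖ ^ i) * ‖E‖ * (K * ‖A + E‖ ^ k) := by
    calc ‖A ^ i * E * (A + E) ^ k‖ ≤ ‖A ^ i * E‖ * ‖(A + E) ^ k‖ := norm_mul_le _ _
      _ ≤ (‖A ^ i‖ * ‖E‖) * ‖(A + E) ^ k‖ := by
          apply mul_le_mul_of_nonneg_right (norm_mul_le _ _) (norm_nonneg _)
      _ ≤ (K * ‖A‖ ^ i) * ‖E‖ * (K * ‖A + E‖ ^ k) := by
          apply mul_le_mul
          · exact mul_le_mul_of_nonneg_right (norm_pow_le_aux A i) (norm_nonneg _)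
          · exact norm_pow_le_aux (A + E) k
          · exact norm_nonneg _
          · positivity
  calc ‖c (i, k)‖ * ‖A ^ i * E * (A + E) ^ k‖
      ≤ (((Nat.factorial i : ℝ))⁻¹ * ((Nat.factorial k : ℝ))⁻¹)
        * ((K * ‖A‖ ^ i) * ‖E‖ * (K * ‖A + E‖ ^ k)) :=
        mul_le_mul (hc (i, k)) h2 (norm_nonneg _) (by positivity)
    _ = (K * ‖A‖ ^ i / Nat.factorial i) * (K * ‖E‖ * ‖A + E‖ ^ k / Nat.factorial k) := by
        field_simp

lemma summable_norm_F (A E : 𝔸) (ℓ : ℕ) :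
    Summable fun p : ℕ × ℕ =>
      ‖((Nat.factorial (p.1 + p.2 + ℓ + 1) : ℝ))⁻¹ • (A ^ p.1 * E * (A + E) ^ p.2)‖ := by
  refine summable_norm_gen A E _ fun p => ?_
  obtain ⟨i, k⟩ := p
  have hfac : ((Nat.factorial i * Nat.factorial k : ℕ) : ℝ)
      ≤ (Nat.factorial (i + k + ℓ + 1) : ℝ) := by
    exact_mod_cast le_trans
      (Nat.le_of_dvd (Nat.factorial_pos _) (Nat.factorial_mul_factorial_dvd_factorial_add i k))
      (Nat.factorial_le (by omega))
  rw [abs_of_nonneg (by positivity), ← mul_inv]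
  apply inv_anti₀ (by positivity)
  exact_mod_cast hfac

lemma lhs_eq (A E : 𝔸) (ℓ : ℕ) :
    phiM ℓ (A + E) - phiM ℓ A
      = ∑' p : ℕ × ℕ, ((Nat.factorial (p.1 + p.2 + ℓ + 1) : ℝ))⁻¹
          • (A ^ p.1 * E * (A + E) ^ p.2) := by
  classical
  set B := A + E with hB
  set F : ℕ × ℕ → 𝔸 := fun p =>
    ((Nat.factorial (p.1 + p.2 + ℓ + 1) : ℝ))⁻¹ • (A ^ p.1 * E * B ^ p.2) with hF
  have hFsum : Summable F := (summable_norm_F A E ℓ).of_norm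
  have hsA : Summable fun k : ℕ => ((Nat.factorial (k + ℓ) : ℝ))⁻¹ • A ^ k :=
    (summable_norm_phi ℓ A).of_norm
  have hsB : Summable fun k : ℕ => ((Nat.factorial (k + ℓ) : ℝ))⁻¹ • B ^ k :=
    (summable_norm_phi ℓ B).of_norm
  -- step 1: LHS = ∑' m, c m • (B^m - A^m)
  have step1 : phiM ℓ B - phiM ℓ A
      = ∑' m : ℕ, ((Nat.factorial (m + ℓ) : ℝ))⁻¹ • (B ^ m - A ^ m) := by
    rw [phiM, phiM, ← Summable.tsum_sub hsB hsA]
    exact tsum_congr fun m => (smul_sub _ _ _).symm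
  -- the summand as a finite sum
  have hGs : ∀ m : ℕ, ((Nat.factorial (m + ℓ) : ℝ))⁻¹ • (B ^ m - A ^ m)
      = ∑ i ∈ Finset.range m,
          ((Nat.factorial (m + ℓ) : ℝ))⁻¹ • (A ^ i * E * B ^ (m - 1 - i)) := by
    intro m
    rw [pow_sub_pow_telescope A B m, Finset.smul_sum]
    refine Finset.sum_congr rfl fun i _ => ?_
    rw [hB, add_sub_cancel_left]
  set G : ℕ → 𝔸 := fun m => ∑ i ∈ Finset.range m,
      ((Nat.factorial (m + ℓ) : ℝ))⁻¹ • (A ^ i * E * B ^ (m - 1 - i)) with hG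
  have hGsum : Summable G := by
    refine Summable.congr (hsB.sub hsA) ?_
    intro m
    rw [← smul_sub]
    exact hGs m
  have step2 : (∑' m : ℕ, ((Nat.factorial (m + ℓ) : ℝ))⁻¹ • (B ^ m - A ^ m)) = ∑' m, G m :=
    tsum_congr hGs
  -- shift index
  have step3 : (∑' m, G m) = ∑' m, G (m + 1) := by
    rw [Summable.tsum_eq_zero_add hGsum]
    simp [hG]
  -- identify with antidiagonal sums
  have step4 : ∀ m : ℕ, G (m + 1) = ∑ p ∈ Finset.HasAntidiagonal.antidiagonal m, F p := by
    intro m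
    rw [Finset.Nat.sum_antidiagonal_eq_sum_range_succ_mk]
    refine Finset.sum_congr rfl fun i hi => ?_
    rw [Finset.mem_range] at hi
    have h1 : i + (m - i) + ℓ + 1 = m + 1 + ℓ := by omega
    have h2 : m + 1 - 1 - i = m - i := by omega
    simp only [hF, h1, h2]
  -- sigma / prod reindexing
  have step5 : (∑' p : ℕ × ℕ, F p) = ∑' m, ∑ p ∈ Finset.HasAntidiagonal.antidiagonal m, F p := by
    have he : (∑' p : ℕ × ℕ, F p)
        = ∑' x : Σ m : ℕ, Finset.HasAntidiagonal.antidiagonal m, F (Finset.HasAntidiagonal.sigmaAntidiagonalEquivProd x) :=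
      (Finset.HasAntidiagonal.sigmaAntidiagonalEquivProd.tsum_eq F).symm
    rw [he]
    have hs : Summable fun x : Σ m : ℕ, Finset.HasAntidiagonal.antidiagonal m =>
        F (Finset.HasAntidiagonal.sigmaAntidiagonalEquivProd x) :=
      Finset.HasAntidiagonal.sigmaAntidiagonalEquivProd.summable_iff.mpr hFsum
    rw [Summable.tsum_sigma hs]
    refine tsum_congr fun m => ?_
    rw [← Finset.tsum_subtype]
    rfl
  rw [step1, step2, step3, step5]
  exact tsum_congr step4

lemma integrand_eq (A E : 𝔸) (ℓ : ℕ) (s : ℝ) :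
    s ^ ℓ • (phiM 0 ((1 - s) • A) * E * phiM ℓ (s • (A + E)))
      = ∑' p : ℕ × ℕ, (s ^ (p.2 + ℓ) * (1 - s) ^ p.1) •
          ((((Nat.factorial p.1 : ℝ))⁻¹ * ((Nat.factorial (p.2 + ℓ) : ℝ))⁻¹) •
            (A ^ p.1 * E * (A + E) ^ p.2)) := by
  set B := A + E with hB
  set a : ℕ → 𝔸 := fun i => ((1 - s) ^ i * ((Nat.factorial i : ℝ))⁻¹) • A ^ i with haa
  set b : ℕ → 𝔸 := fun k => (s ^ k * ((Nat.factorial (k + ℓ) : ℝ))⁻¹) • B ^ k with hbb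
  have ha : phiM 0 ((1 - s) • A) = ∑' i, a i := by
    rw [phiM_smul 0 (1 - s) A]
    exact tsum_congr fun i => by rw [haa]; simp
  have hb : phiM ℓ (s • B) = ∑' k, b k := phiM_smul ℓ s B
  have hsa : Summable fun i => ‖a i‖ := by
    refine (summable_norm_phi 0 ((1 - s) • A)).congr fun i => ?_
    rw [haa]
    simp [smul_pow, smul_smul, mul_comm]
  have hsb : Summable fun k => ‖b k‖ := by
    refine (summable_norm_phi ℓ (s • B)).congr fun k => ?_
    rw [hbb]
    simp [smul_pow, smul_smul, mul_comm]
  have hsEb : Summable fun k => ‖E * b k‖ :=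
    Summable.of_nonneg_of_le (fun k => norm_nonneg _) (fun k => norm_mul_le _ _)
      (hsb.mul_left ‖E‖)
  have hEb : E * ∑' k, b k = ∑' k, E * b k := (Summable.tsum_mul_left E hsb.of_norm).symm
  erw [ha, hb, mul_assoc, hEb, tsum_mul_tsum_of_summable_norm hsa hsEb,
    ← Summable.tsum_const_smul (s ^ ℓ) (summable_mul_of_summable_norm hsa hsEb)]
  refine tsum_congr fun p => ?_
  rw [haa, hbb]
  simp only [smul_mul_assoc, mul_smul_comm, smul_smul, ← mul_assoc]
  congr 1
  ring

lemma rhs_eq (A E : 𝔸) (ℓ : ℕ) :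
    (∫ s in (0:ℝ)..1, s ^ ℓ • (phiM 0 ((1 - s) • A) * E * phiM ℓ (s • (A + E))))
      = ∑' p : ℕ × ℕ, ((Nat.factorial (p.1 + p.2 + ℓ + 1) : ℝ))⁻¹
          • (A ^ p.1 * E * (A + E) ^ p.2) := by
  set B := A + E with hB
  set C : ℕ × ℕ → 𝔸 := fun p =>
      (((Nat.factorial p.1 : ℝ))⁻¹ * ((Nat.factorial (p.2 + ℓ) : ℝ))⁻¹)
        • (A ^ p.1 * E * B ^ p.2) with hC
  set h : ℕ × ℕ → ℝ → 𝔸 := fun p s =>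
      (s ^ (p.2 + ℓ) * (1 - s) ^ p.1) • C p with hh
  have hcont : ∀ p : ℕ × ℕ, Continuous (h p) := fun p =>
    (((continuous_pow _).mul ((continuous_const.sub continuous_id).pow _)).smul
      continuous_const)
  have hsumC : Summable fun p : ℕ × ℕ => ‖C p‖ := by
    refine summable_norm_gen A E _ fun p => ?_
    rw [abs_of_nonneg (by positivity)]
    have : ((Nat.factorial (p.2 + ℓ) : ℝ))⁻¹ ≤ ((Nat.factorial p.2 : ℝ))⁻¹ := by
      apply inv_anti₀ (by positivity)
      exact_mod_cast Nat.factorial_le (Nat.le_add_right p.2 ℓ)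
    exact mul_le_mul_of_nonneg_left this (by positivity)
  have hbound : ∀ p : ℕ × ℕ, ∀ s ∈ Set.Ioc (0:ℝ) 1, ‖h p s‖ ≤ ‖C p‖ := by
    rintro p s ⟨hs0, hs1⟩
    rw [hh, norm_smul]
    have h1 : |s ^ (p.2 + ℓ) * (1 - s) ^ p.1| ≤ 1 := by
      rw [abs_mul, abs_pow, abs_pow]
      have e1 : |s| ≤ 1 := abs_le.mpr ⟨by linarith, hs1⟩
      have e2 : |1 - s| ≤ 1 := abs_le.mpr ⟨by linarith, by linarith⟩
      calc |s| ^ (p.2 + ℓ) * |1 - s| ^ p.1 ≤ 1 ^ (p.2 + ℓ) * 1 ^ p.1 := by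
            apply mul_le_mul (pow_le_pow_left₀ (abs_nonneg _) e1 _)
              (pow_le_pow_left₀ (abs_nonneg _) e2 _) (by positivity) (by positivity)
        _ = 1 := by simp
    calc ‖s ^ (p.2 + ℓ) * (1 - s) ^ p.1‖ * ‖C p‖ ≤ 1 * ‖C p‖ :=
          mul_le_mul_of_nonneg_right (by rwa [Real.norm_eq_abs]) (norm_nonneg _)
      _ = ‖C p‖ := one_mul _
  rw [intervalIntegral.integral_of_le zero_le_one]
  have hptw : ∀ s : ℝ, s ^ ℓ • (phiM 0 ((1 - s) • A) * E * phiM ℓ (s • (A + E)))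
      = ∑' p : ℕ × ℕ, h p s := fun s => integrand_eq A E ℓ s
  simp only [hB, hptw]
  haveI : TopologicalSpace.PseudoMetrizableSpace 𝔸 :=
    inferInstanceAs (TopologicalSpace.PseudoMetrizableSpace (Fin n → Fin n → ℝ))
  erw [MeasureTheory.integral_tsum (fun p => (hcont p).aestronglyMeasurable) ?hfin]
  case hfin =>
    have hle : ∀ p : ℕ × ℕ,
        (∫⁻ s, ‖h p s‖₊ ∂(MeasureTheory.volume.restrict (Set.Ioc (0:ℝ) 1)))
          ≤ ENNReal.ofReal ‖C p‖ := by
      intro p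
      calc (∫⁻ s, ‖h p s‖₊ ∂(MeasureTheory.volume.restrict (Set.Ioc (0:ℝ) 1)))
          ≤ ∫⁻ _, ENNReal.ofReal ‖C p‖
              ∂(MeasureTheory.volume.restrict (Set.Ioc (0:ℝ) 1)) := by
            apply MeasureTheory.lintegral_mono_ae
            filter_upwards [MeasureTheory.ae_restrict_mem measurableSet_Ioc] with s hs
            rw [← enorm_eq_nnnorm, ← ofReal_norm]
            exact ENNReal.ofReal_le_ofReal (hbound p s hs)
        _ = ENNReal.ofReal ‖C p‖ := by
            rw [MeasureTheory.lintegral_const, MeasureTheory.Measure.restrict_apply_univ,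
              Real.volume_Ioc]
            norm_num
    refine ne_of_lt (lt_of_le_of_lt (ENNReal.tsum_le_tsum hle) ?_)
    rw [← ENNReal.ofReal_tsum_of_nonneg (fun p => norm_nonneg _) hsumC]
    exact ENNReal.ofReal_lt_top
  refine tsum_congr fun p => ?_
  obtain ⟨i, k⟩ := p
  rw [hh]
  simp only
  rw [integral_smul_const]
  have hIoc : (∫ s in Set.Ioc (0:ℝ) 1, s ^ (k + ℓ) * (1 - s) ^ i)
      = ∫ s in (0:ℝ)..1, s ^ (k + ℓ) * (1 - s) ^ i :=
    (intervalIntegral.integral_of_le zero_le_one).symm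
  rw [hIoc, beta_nat_aux (k + ℓ) i, hC]
  simp only
  rw [smul_smul]
  congr 1
  have he : k + ℓ + i + 1 = i + k + ℓ + 1 := by omega
  rw [he]
  have h0 : (Nat.factorial (i + k + ℓ + 1) : ℝ) ≠ 0 := by positivity
  have h1 : (Nat.factorial i : ℝ) ≠ 0 := by positivity
  have h2 : (Nat.factorial (k + ℓ) : ℝ) ≠ 0 := by positivity
  field_simp

end aux

theorem phiM_perturbation_integral {n : ℕ} (A E : Matrix (Fin n) (Fin n) ℝ) (ℓ : ℕ) :
    phiM ℓ (A + E) - phiM ℓ A =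
      ∫ s in (0:ℝ)..1,
        s ^ ℓ • (phiM 0 ((1 - s) • A) * E * phiM ℓ (s • (A + E))) := by
  rw [lhs_eq A E ℓ, rhs_eq A E ℓ]
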